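/- Let θ > 0 and k₂ > 0 be fixed real constants, and suppose 0 < A < k₂/θ². Then h_A has exactly one zero ȳ(A) in (0, ∞); moreover h_A(y) < 0 for all y ∈ (0, ȳ(A)) and h_A(y) > 0 for all y ∈ (ȳ(A), ∞). -/

import Mathlib

/-- `h_A(y) = A θ e^{θ y} − A θ e^{−θ y} − 2 k₂ y`. -/
noncomputable def hFun (θ k₂ A y : ℝ) : ℝ :=
  A * θ * Real.exp (θ * y) - A * θ * Real.exp (-(θ * y)) - 2 * k₂ * y


lemma sinh_lt_mul_cosh {x : ℝ} (hx : 0 < x) : Real.sinh x < x * Real.cosh x := by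
  have h : StrictMonoOn (fun x : ℝ => x * Real.cosh x - Real.sinh x) (Set.Ici 0) := by
    apply strictMonoOn_of_deriv_pos (convex_Ici 0)
    · fun_prop
    · intro t ht
      rw [interior_Ici] at ht
      have h1 : HasDerivAt (fun x : ℝ => x * Real.cosh x - Real.sinh x)
          (1 * Real.cosh t + t * Real.sinh t - Real.cosh t) t :=
        ((hasDerivAt_id t).mul (Real.hasDerivAt_cosh t)).sub (Real.hasDerivAt_sinh t)
      rw [h1.deriv]
      have := Real.sinh_pos_iff.2 ht
      have ht2 := Set.mem_Ioi.1 ht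
      nlinarith [mul_pos ht2 this]
  have := h (Set.self_mem_Ici) (Set.mem_Ici.2 hx.le) hx
  simpa using this

lemma sinh_div_strictMono {θ : ℝ} (hθ : 0 < θ) :
    StrictMonoOn (fun y : ℝ => Real.sinh (θ * y) / y) (Set.Ioi 0) := by
  apply strictMonoOn_of_deriv_pos (convex_Ioi 0)
  · apply ContinuousOn.div (by fun_prop) continuousOn_id
    intro y hy; exact ne_of_gt (Set.mem_Ioi.1 hy)
  · intro y hy
    rw [interior_Ioi, Set.mem_Ioi] at hy
    have hs : HasDerivAt (fun y : ℝ => Real.sinh (θ * y)) (Real.cosh (θ * y) * (θ * 1)) y :=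
      (Real.hasDerivAt_sinh (θ * y)).comp y ((hasDerivAt_id y).const_mul θ)
    have hd : HasDerivAt (fun y : ℝ => Real.sinh (θ * y) / y)
        ((Real.cosh (θ * y) * (θ * 1) * y - Real.sinh (θ * y) * 1) / y ^ 2) y :=
      hs.div (hasDerivAt_id y) (ne_of_gt hy)
    rw [hd.deriv]
    apply div_pos _ (by positivity)
    have := sinh_lt_mul_cosh (x := θ * y) (by positivity)
    nlinarith

theorem stmt_1 (θ k₂ A : ℝ) (hθ : 0 < θ) (hk : 0 < k₂)
    (hA0 : 0 < A) (hA : A < k₂ / θ ^ 2) :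
    ∃ ybar : ℝ, 0 < ybar ∧ hFun θ k₂ A ybar = 0 ∧
      (∀ y : ℝ, 0 < y → hFun θ k₂ A y = 0 → y = ybar) ∧
      (∀ y : ℝ, 0 < y → y < ybar → hFun θ k₂ A y < 0) ∧
      (∀ y : ℝ, ybar < y → 0 < hFun θ k₂ A y) := by
  set F : ℝ → ℝ := fun y => A * θ * (Real.sinh (θ * y) / y) - k₂ with hFdef
  -- h = 2 y F y for y > 0
  have hkey : ∀ y : ℝ, 0 < y → hFun θ k₂ A y = 2 * y * F y := by
    intro y hy
    simp only [hFdef, hFun, Real.sinh_eq]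
    field_simp
  -- strict mono
  have hmono : StrictMonoOn F (Set.Ioi 0) := by
    intro a ha b hb hab
    have := sinh_div_strictMono hθ ha hb hab
    simp only [hFdef]
    have hAθ : 0 < A * θ := by positivity
    nlinarith
  -- continuity
  have hcont : ContinuousOn F (Set.Ioi 0) := by
    apply ContinuousOn.sub _ continuousOn_const
    apply ContinuousOn.mul continuousOn_const
    apply ContinuousOn.div (by fun_prop) continuousOn_id
    intro y hy; exact ne_of_gt (Set.mem_Ioi.1 hy)
  -- negative near 0
  have hlim0 : Filter.Tendsto F (nhdsWithin 0 (Set.Ioi 0)) (nhds (A * θ * θ - k₂)) := by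
    have hs : Filter.Tendsto (fun y : ℝ => Real.sinh (θ * y) / y)
        (nhdsWithin 0 (Set.Ioi 0)) (nhds θ) := by
      have hd : HasDerivAt (fun y : ℝ => Real.sinh (θ * y)) (Real.cosh (θ * 0) * (θ * 1)) 0 :=
        (Real.hasDerivAt_sinh (θ * 0)).comp 0 ((hasDerivAt_id 0).const_mul θ)
      simp only [mul_zero, Real.cosh_zero, one_mul, mul_one] at hd
      have h2 := (hasDerivAt_iff_tendsto_slope.1 hd).mono_left
        (nhdsWithin_mono 0 (by intro y hy; exact ne_of_gt (Set.mem_Ioi.1 hy)))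
      apply h2.congr'
      filter_upwards [self_mem_nhdsWithin] with y hy
      rw [slope_def_field]
      simp [Real.sinh_zero]
    exact ((hs.const_mul (A * θ)).sub (tendsto_const_nhds (x := k₂)))
  have hneg : ∃ a : ℝ, 0 < a ∧ F a < 0 := by
    have hlt : A * θ * θ - k₂ < 0 := by
      rw [div_eq_mul_inv] at hA
      have := (lt_div_iff₀ (by positivity : (0:ℝ) < θ ^ 2)).1 hA
      nlinarith
    have := hlim0.eventually (eventually_lt_nhds hlt)
    rcases (this.and self_mem_nhdsWithin).exists with ⟨a, ha1, ha2⟩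
    exact ⟨a, ha2, ha1⟩
  -- positive for large y
  have hpos : ∃ b : ℝ, 0 < b ∧ 0 < F b := by
    have htop : Filter.Tendsto F Filter.atTop Filter.atTop := by
      have h0 : Filter.Tendsto (fun y : ℝ => θ * y) Filter.atTop Filter.atTop :=
        Filter.Tendsto.const_mul_atTop hθ Filter.tendsto_id
      have h1 : Filter.Tendsto (fun y : ℝ => Real.exp (θ * y) / (θ * y))
          Filter.atTop Filter.atTop := by
        have := (Real.tendsto_exp_div_pow_atTop 1).comp h0
        simpa [Function.comp_def, pow_one] using this
      have h2 : Filter.Tendsto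
          (fun y : ℝ => A * θ * (θ / 2 * (Real.exp (θ * y) / (θ * y)) + (-1)) + (-k₂))
          Filter.atTop Filter.atTop := by
        apply Filter.tendsto_atTop_add_const_right
        apply Filter.Tendsto.const_mul_atTop (by positivity : (0:ℝ) < A * θ)
        apply Filter.tendsto_atTop_add_const_right
        exact Filter.Tendsto.const_mul_atTop (by positivity) h1
      apply Filter.tendsto_atTop_mono' _ _ h2
      filter_upwards [Filter.eventually_ge_atTop 1] with y hy
      have hy0 : (0:ℝ) < y := lt_of_lt_of_le one_pos hy
      have h2y : (0:ℝ) < 2 * y := by linarith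
      have e1 : θ / 2 * (Real.exp (θ * y) / (θ * y)) = Real.exp (θ * y) / (2 * y) := by
        field_simp
      have hE : Real.exp (-(θ * y)) ≤ 1 := by
        rw [Real.exp_le_one_iff]; nlinarith
      have hE2 : Real.exp (-(θ * y)) / (2 * y) ≤ 1 := by
        rw [div_le_one h2y]; linarith
      have hsinh : Real.exp (θ * y) / (2 * y) + (-1) ≤ Real.sinh (θ * y) / y := by
        rw [Real.sinh_eq, div_div, sub_div]
        linarith
      simp only [hFdef]
      rw [e1]
      have hAθ : (0:ℝ) ≤ A * θ := by positivity
      nlinarith [mul_le_mul_of_nonneg_left hsinh hAθ]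
    rcases ((htop.eventually_gt_atTop 0).and (Filter.eventually_gt_atTop 0)).exists
       with ⟨b, hb1, hb2⟩
    exact ⟨b, hb2, hb1⟩
  obtain ⟨a, ha0, haF⟩ := hneg
  obtain ⟨b, hb0, hbF⟩ := hpos
  have hab : a < b := by
    by_contra h
    push_neg at h
    rcases eq_or_lt_of_le h with h | h
    · rw [h] at hbF; linarith
    · have := hmono hb0 ha0 h; linarith
  have hsub : Set.Icc a b ⊆ Set.Ioi 0 := fun y hy => lt_of_lt_of_le ha0 hy.1
  obtain ⟨ybar, hymem, hyF⟩ := intermediate_value_Icc hab.le (hcont.mono hsub)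
    (Set.mem_Icc.2 ⟨haF.le, hbF.le⟩)
  have hy0 : 0 < ybar := lt_of_lt_of_le ha0 hymem.1
  refine ⟨ybar, hy0, ?_, ?_, ?_, ?_⟩
  · rw [hkey ybar hy0, hyF]; ring
  · intro y hy hzero
    rw [hkey y hy] at hzero
    have hFy : F y = 0 := by
      have : (2:ℝ) * y ≠ 0 := by positivity
      exact (mul_eq_zero.1 hzero).resolve_left this
    rcases lt_trichotomy y ybar with h | h | h
    · have := hmono (Set.mem_Ioi.2 hy) (Set.mem_Ioi.2 hy0) h
      rw [hFy, hyF] at this; exact absurd this (lt_irrefl 0)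
    · exact h
    · have := hmono (Set.mem_Ioi.2 hy0) (Set.mem_Ioi.2 hy) h
      rw [hFy, hyF] at this; exact absurd this (lt_irrefl 0)
  · intro y hy hlt
    rw [hkey y hy]
    have := hmono (Set.mem_Ioi.2 hy) (Set.mem_Ioi.2 hy0) hlt
    rw [hyF] at this
    exact mul_neg_of_pos_of_neg (by positivity) this
  · intro y hlt
    have hy : 0 < y := lt_trans hy0 hlt
    rw [hkey y hy]
    have := hmono (Set.mem_Ioi.2 hy0) (Set.mem_Ioi.2 hy) hlt
    rw [hyF] at this
    exact mul_pos (by positivity) this
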